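/- The area of the lunar intersection of two discs: if B(r) and B(R) are discs of radii r and R whose centers are at distance d_c with |R − r| < d_c < R + r, then Area(B(r) ∩ B(R)) = r²·arccos((d_c² + r² − R²)/(2 r d_c)) + R²·arccos((d_c² + R² − r²)/(2 R d_c)) − (1/2)·√((r+R−d_c)(r+R+d_c)(d_c+r−R)(d_c−r+R)). -/

import Mathlib

open Real Metric MeasureTheory

lemma seg_integral {r a : ℝ} (hr : 0 < r) (ha : -r < a) (ha' : a < r) :
    ∫ x in a..r, 2 * Real.sqrt (r^2 - x^2)
      = r^2 * Real.arccos (a/r) - a * Real.sqrt (r^2 - a^2) := by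
  set F : ℝ → ℝ := fun x => r^2 * Real.arcsin (x/r) + x * Real.sqrt (r^2 - x^2) with hF
  have hderiv : ∀ x ∈ Set.Ioo a r, HasDerivAt F (2 * Real.sqrt (r^2 - x^2)) x := by
    intro x hx
    have hx1 : -r < x := lt_of_le_of_lt ha.le hx.1
    have hx2 : x < r := hx.2
    have hpos : 0 < r^2 - x^2 := by nlinarith
    have hs : 0 < Real.sqrt (r^2 - x^2) := Real.sqrt_pos.2 hpos
    have hne1 : x / r ≠ -1 := by
      intro h
      have : x = -r := by field_simp at h; linarith
      linarith
    have hne2 : x / r ≠ 1 := by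
      intro h
      have : x = r := by field_simp at h; exact h
      linarith
    have h1 : HasDerivAt (fun x : ℝ => x / r) (1 / r) x := by
      simpa using (hasDerivAt_id x).div_const r
    have harc : HasDerivAt (fun x : ℝ => Real.arcsin (x / r))
        (1 / Real.sqrt (1 - (x/r)^2) * (1 / r)) x :=
      HasDerivAt.comp (h₂ := Real.arcsin) x (Real.hasDerivAt_arcsin hne1 hne2) h1
    have hu : HasDerivAt (fun x : ℝ => r^2 - x^2) (-(2*x)) x := by
      simpa using ((hasDerivAt_pow 2 x).const_sub (r^2))
    have hsq : HasDerivAt (fun x : ℝ => Real.sqrt (r^2 - x^2))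
        (1 / (2 * Real.sqrt (r^2 - x^2)) * (-(2*x))) x :=
      (Real.hasDerivAt_sqrt hpos.ne').comp x hu
    have hmul : HasDerivAt (fun x : ℝ => x * Real.sqrt (r^2 - x^2))
        (1 * Real.sqrt (r^2 - x^2) + x * (1 / (2 * Real.sqrt (r^2 - x^2)) * (-(2*x)))) x :=
      (hasDerivAt_id x).mul hsq
    have htot := ((harc.const_mul (r^2)).add hmul)
    have hsqrt1 : Real.sqrt (1 - (x/r)^2) = Real.sqrt (r^2 - x^2) / r := by
      rw [show (1 - (x/r)^2) = (r^2 - x^2) / r^2 by field_simp,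
        Real.sqrt_div hpos.le, Real.sqrt_sq hr.le]
    convert htot using 1
    · rfl
    · rfl
    · rfl
    rw [hsqrt1]
    have hs2 : Real.sqrt (r^2 - x^2) ^ 2 = r^2 - x^2 := Real.sq_sqrt hpos.le
    field_simp
    linear_combination hs2
  have hcont : ContinuousOn F (Set.Icc a r) := by
    apply Continuous.continuousOn
    exact (continuous_const.mul (Real.continuous_arcsin.comp (continuous_id.div_const r))).add
      (continuous_id.mul (Real.continuous_sqrt.comp (by continuity)))
  have hint : IntervalIntegrable (fun x => 2 * Real.sqrt (r^2 - x^2)) volume a r := by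
    apply Continuous.intervalIntegrable
    exact continuous_const.mul (Real.continuous_sqrt.comp (by continuity))
  have := intervalIntegral.integral_eq_sub_of_hasDeriv_right_of_le ha'.le hcont
    (fun x hx => (hderiv x hx).hasDerivWithinAt) hint
  rw [this, hF]
  simp only [div_self hr.ne', Real.arcsin_one, Real.sqrt_eq_zero', Real.arccos_eq_pi_div_two_sub_arcsin]
  have : Real.sqrt (r^2 - r^2) = 0 := by simp
  rw [this]
  ring


lemma slice_vol (m : ℝ) : volume {y : ℝ | y^2 ≤ m} = ENNReal.ofReal (2 * Real.sqrt m) := by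
  rcases le_or_gt m 0 with hm | hm
  · rcases eq_or_lt_of_le hm with hm0 | hm0
    · subst hm0
      have : {y : ℝ | y^2 ≤ 0} = {0} := by
        ext y; simp only [Set.mem_setOf_eq, Set.mem_singleton_iff]
        constructor
        · intro h
          exact pow_eq_zero_iff two_ne_zero |>.mp (le_antisymm h (sq_nonneg y))
        · rintro rfl; simp
      rw [this]
      simp
    · have : {y : ℝ | y^2 ≤ m} = ∅ := by
        ext y; simp only [Set.mem_setOf_eq, Set.mem_empty_iff_false, iff_false, not_le]
        nlinarith [sq_nonneg y]
      rw [this, Real.sqrt_eq_zero'.mpr hm]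
      simp
  · have hset : {y : ℝ | y^2 ≤ m} = Set.Icc (-Real.sqrt m) (Real.sqrt m) := by
      ext y
      simp only [Set.mem_setOf_eq, Set.mem_Icc]
      constructor
      · intro h
        have := Real.abs_le_sqrt h
        constructor <;> [linarith [abs_nonneg y, neg_abs_le y]; linarith [le_abs_self y]]
      · intro ⟨h1, h2⟩
        have : |y| ≤ Real.sqrt m := abs_le.mpr ⟨h1, h2⟩
        calc y^2 = |y|^2 := (sq_abs y).symm
        _ ≤ (Real.sqrt m)^2 := by nlinarith [abs_nonneg y]
        _ = m := Real.sq_sqrt hm.le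
    rw [hset, Real.volume_Icc]
    congr 1
    ring

lemma lune_vol_eq_integral (r R d : ℝ) (hr : 0 < r) (hR : 0 < R) :
    volume (closedBall (0:ℂ) r ∩ closedBall (d:ℂ) R)
      = ENNReal.ofReal (∫ x : ℝ,
          2 * Real.sqrt (min (r^2 - x^2) (R^2 - (x - d)^2))) := by
  set g : ℝ → ℝ := fun x => Real.sqrt (min (r^2 - x^2) (R^2 - (x - d)^2)) with hg
  have hgcont : Continuous g := Real.continuous_sqrt.comp (by continuity)
  have hgnn : ∀ x, 0 ≤ g x := fun x => Real.sqrt_nonneg _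
  have hgsupp : ∀ x ∉ Set.Icc (-r) r, g x = 0 := by
    intro x hx
    simp only [Set.mem_Icc, not_and_or, not_le] at hx
    have h1 : r^2 - x^2 ≤ 0 := by rcases hx with h | h <;> nlinarith
    exact Real.sqrt_eq_zero'.mpr (le_trans (min_le_left _ _) h1)
  have hgint : Integrable (fun x => 2 * g x) := by
    refine (Continuous.integrable_of_hasCompactSupport (by fun_prop) ?_)
    exact HasCompactSupport.intro (isCompact_Icc (a := -r) (b := r))
      (fun x hx => by simp [hgsupp x hx])
  -- reduce ℂ to ℝ × ℝ
  set T : Set (ℝ × ℝ) := {p | p.1^2 + p.2^2 ≤ r^2 ∧ (p.1 - d)^2 + p.2^2 ≤ R^2} with hT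
  have hTm : MeasurableSet T := by
    have : T = {p : ℝ × ℝ | p.1^2 + p.2^2 ≤ r^2} ∩ {p | (p.1 - d)^2 + p.2^2 ≤ R^2} := rfl
    rw [this]
    exact (measurableSet_le (by fun_prop) measurable_const).inter
      (measurableSet_le (by fun_prop) measurable_const)
  have habs_le : ∀ (w : ℂ) (s : ℝ), 0 ≤ s →
      (‖w‖ ≤ s ↔ w.re^2 + w.im^2 ≤ s^2) := by
    intro w s hs
    rw [Complex.norm_def, show w.re^2 + w.im^2 = Complex.normSq w by
        rw [Complex.normSq_apply]; ring,
      ]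
    constructor
    · intro h
      have h2 := Real.sq_sqrt (Complex.normSq_nonneg w)
      nlinarith [Real.sqrt_nonneg (Complex.normSq w)]
    · intro h
      calc Real.sqrt (Complex.normSq w) ≤ Real.sqrt (s^2) := Real.sqrt_le_sqrt h
      _ = s := Real.sqrt_sq hs
  have hpre : closedBall (0:ℂ) r ∩ closedBall (d:ℂ) R
      = Complex.measurableEquivRealProd ⁻¹' T := by
    ext z
    simp only [Set.mem_inter_iff, mem_closedBall, Set.mem_preimage,
      Complex.measurableEquivRealProd_apply, hT, Set.mem_setOf_eq]
    have e1 : dist z 0 ≤ r ↔ z.re^2 + z.im^2 ≤ r^2 := by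
      rw [Complex.dist_eq, sub_zero, habs_le _ _ hr.le]
    have e2 : dist z (d:ℂ) ≤ R ↔ (z.re - d)^2 + z.im^2 ≤ R^2 := by
      rw [Complex.dist_eq, habs_le _ _ hR.le]
      simp [Complex.sub_re, Complex.sub_im]
    exact and_congr e1 e2
  rw [hpre, Complex.volume_preserving_equiv_real_prod.measure_preimage
    hTm.nullMeasurableSet, Measure.volume_eq_prod, Measure.prod_apply hTm]
  have hslice : ∀ x : ℝ, volume (Prod.mk x ⁻¹' T) = ENNReal.ofReal (2 * g x) := by
    intro x
    have hx : Prod.mk x ⁻¹' T = {y : ℝ | y^2 ≤ min (r^2 - x^2) (R^2 - (x - d)^2)} := by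
      ext y
      simp only [Set.mem_preimage, hT, Set.mem_setOf_eq, le_min_iff]
      constructor <;> intro h <;> exact ⟨by linarith [h.1], by linarith [h.2]⟩
    rw [hx, slice_vol]
  simp_rw [hslice]
  rw [← MeasureTheory.ofReal_integral_eq_lintegral_ofReal hgint
    (Filter.Eventually.of_forall (fun x => by positivity))]



set_option maxHeartbeats 1000000 in
lemma lune_integral_eval (r R d : ℝ) (hr : 0 < r) (hR : 0 < R)
    (h₁ : |R - r| < d) (h₂ : d < R + r) :
    (∫ x : ℝ, 2 * Real.sqrt (min (r^2 - x^2) (R^2 - (x - d)^2)))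
      = r ^ 2 * Real.arccos ((d ^ 2 + r ^ 2 - R ^ 2) / (2 * r * d))
      + R ^ 2 * Real.arccos ((d ^ 2 + R ^ 2 - r ^ 2) / (2 * R * d))
      - (1 / 2) * Real.sqrt ((r + R - d) * (r + R + d) * (d + r - R) * (d - r + R)) := by
  have hd0 : 0 < d := lt_of_le_of_lt (abs_nonneg _) h₁
  have ha := abs_lt.mp h₁
  have h2d : (0:ℝ) < 2 * d := by linarith
  set x₀ := (d^2 + r^2 - R^2) / (2*d) with hx₀
  set x₁ := (d^2 + R^2 - r^2) / (2*d) with hx₁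
  have hsum : x₀ + x₁ = d := by rw [hx₀, hx₁]; field_simp; ring
  have hx0r : x₀ < r := (div_lt_iff₀ h2d).mpr (by nlinarith)
  have hx0l : -r < x₀ := (lt_div_iff₀ h2d).mpr (by nlinarith)
  have hx1r : x₁ < R := (div_lt_iff₀ h2d).mpr (by nlinarith)
  have hx1l : -R < x₁ := (lt_div_iff₀ h2d).mpr (by nlinarith)
  have hdx0 : d - R ≤ x₀ := by linarith
  have hle : d - R ≤ r := by linarith
  set g : ℝ → ℝ := fun x => 2 * Real.sqrt (min (r^2 - x^2) (R^2 - (x - d)^2)) with hg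
  have hgcont : Continuous g := by
    exact continuous_const.mul (Real.continuous_sqrt.comp (by continuity))
  have hsupp : ∀ x ∉ Set.Icc (d - R) r, g x = 0 := by
    intro x hx
    simp only [Set.mem_Icc, not_and_or, not_le] at hx
    rw [hg]
    show 2 * Real.sqrt (min (r^2 - x^2) (R^2 - (x - d)^2)) = 0
    rcases hx with h | h
    · have : R^2 - (x - d)^2 ≤ 0 := by nlinarith
      rw [min_comm, Real.sqrt_eq_zero'.mpr (le_trans (min_le_left _ _) this)]; ring
    · have : r^2 - x^2 ≤ 0 := by nlinarith
      rw [Real.sqrt_eq_zero'.mpr (le_trans (min_le_left _ _) this)]; ring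
  have step1 : (∫ x : ℝ, g x) = ∫ x in (d-R)..r, g x := by
    rw [← MeasureTheory.setIntegral_eq_integral_of_forall_compl_eq_zero hsupp,
      MeasureTheory.integral_Icc_eq_integral_Ioc, ← intervalIntegral.integral_of_le hle]
  have int1 : IntervalIntegrable g volume (d-R) x₀ := hgcont.intervalIntegrable _ _
  have int2 : IntervalIntegrable g volume x₀ r := hgcont.intervalIntegrable _ _
  have step2 : (∫ x in (d-R)..r, g x) = (∫ x in (d-R)..x₀, g x) + ∫ x in x₀..r, g x :=
    (intervalIntegral.integral_add_adjacent_intervals int1 int2).symm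
  have cong1 : (∫ x in (d-R)..x₀, g x) = ∫ x in (d-R)..x₀, 2 * Real.sqrt (R^2 - (x - d)^2) := by
    apply intervalIntegral.integral_congr
    intro x hx
    rw [Set.uIcc_of_le hdx0, Set.mem_Icc] at hx
    rw [hg]
    show 2 * Real.sqrt (min (r^2 - x^2) (R^2 - (x - d)^2)) = _
    rw [min_eq_right]
    have : x ≤ x₀ := hx.2
    rw [hx₀] at this
    have := (le_div_iff₀ h2d).mp this
    nlinarith
  have cong2 : (∫ x in x₀..r, g x) = ∫ x in x₀..r, 2 * Real.sqrt (r^2 - x^2) := by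
    apply intervalIntegral.integral_congr
    intro x hx
    rw [Set.uIcc_of_le hx0r.le, Set.mem_Icc] at hx
    rw [hg]
    show 2 * Real.sqrt (min (r^2 - x^2) (R^2 - (x - d)^2)) = _
    rw [min_eq_left]
    have : x₀ ≤ x := hx.1
    rw [hx₀] at this
    have := (div_le_iff₀ h2d).mp this
    nlinarith
  have refl1 : (∫ x in (d-R)..x₀, 2 * Real.sqrt (R^2 - (x - d)^2))
      = ∫ t in x₁..R, 2 * Real.sqrt (R^2 - t^2) := by
    have hfun : (fun x => 2 * Real.sqrt (R^2 - (x - d)^2))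
        = fun x => (fun t => 2 * Real.sqrt (R^2 - t^2)) (d - x) := by
      funext x
      simp only
      rw [show R^2 - (d - x)^2 = R^2 - (x - d)^2 by ring]
    rw [hfun, intervalIntegral.integral_comp_sub_left (fun t => 2 * Real.sqrt (R^2 - t^2)) d]
    have e1 : d - x₀ = x₁ := by linarith
    have e2 : d - (d - R) = R := by ring
    rw [e1, e2]
  have seg1 := seg_integral hR hx1l hx1r
  have seg2 := seg_integral hr hx0l hx0r
  -- final algebra
  set P := (r + R - d) * (r + R + d) * (d + r - R) * (d - r + R) with hPdef
  have hP : 0 ≤ P := by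
    have f1 : 0 < r + R - d := by linarith
    have f2 : 0 < r + R + d := by linarith
    have f3 : 0 < d + r - R := by linarith
    have f4 : 0 < d - r + R := by linarith
    positivity
  have hA : r^2 - x₀^2 = P / (4*d^2) := by rw [hx₀, hPdef]; field_simp; ring
  have hB : R^2 - x₁^2 = P / (4*d^2) := by rw [hx₁, hPdef]; field_simp; ring
  have hsq : Real.sqrt (P / (4*d^2)) = Real.sqrt P / (2*d) := by
    rw [show (4*d^2) = (2*d)^2 by ring, Real.sqrt_div hP, Real.sqrt_sq (by positivity)]
  have hA' : Real.sqrt (r^2 - x₀^2) = Real.sqrt P / (2*d) := by rw [hA, hsq]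
  have hB' : Real.sqrt (R^2 - x₁^2) = Real.sqrt P / (2*d) := by rw [hB, hsq]
  have harg1 : x₀ / r = (d^2 + r^2 - R^2) / (2*r*d) := by
    rw [hx₀, div_div]; ring_nf
  have harg2 : x₁ / R = (d^2 + R^2 - r^2) / (2*R*d) := by
    rw [hx₁, div_div]; ring_nf
  have hkey : x₀ * (Real.sqrt P / (2*d)) + x₁ * (Real.sqrt P / (2*d))
      = (1/2) * Real.sqrt P := by
    rw [show x₀ * (Real.sqrt P / (2*d)) + x₁ * (Real.sqrt P / (2*d))
        = (x₀ + x₁) * (Real.sqrt P / (2*d)) by ring, hsum]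
    field_simp
  calc (∫ x : ℝ, g x) = (∫ x in (d-R)..x₀, g x) + ∫ x in x₀..r, g x := by
        rw [step1, step2]
    _ = (R^2 * Real.arccos (x₁/R) - x₁ * Real.sqrt (R^2 - x₁^2))
        + (r^2 * Real.arccos (x₀/r) - x₀ * Real.sqrt (r^2 - x₀^2)) := by
        rw [cong1, cong2, refl1, seg1, seg2]
    _ = _ := by
        rw [hA', hB', harg1, harg2]
        linarith [hkey]

/-- Area of the lunar intersection of two discs: if discs of radii `r`, `R`
have centers at distance `d_c` with `|R − r| < d_c < R + r`, then
`Area(B(r) ∩ B(R)) = r²·arccos((d_c²+r²−R²)/(2 r d_c)) + R²·arccos((d_c²+R²−r²)/(2 R d_c))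
 − (1/2)·√((r+R−d_c)(r+R+d_c)(d_c+r−R)(d_c−r+R))`. -/
theorem lune_area_formula
    (z₁ z₂ : ℂ) (r R d : ℝ) (hr : 0 < r) (hR : 0 < R)
    (hd : dist z₁ z₂ = d) (h₁ : |R - r| < d) (h₂ : d < R + r) :
    (volume (closedBall z₁ r ∩ closedBall z₂ R)).toReal =
      r ^ 2 * Real.arccos ((d ^ 2 + r ^ 2 - R ^ 2) / (2 * r * d))
      + R ^ 2 * Real.arccos ((d ^ 2 + R ^ 2 - r ^ 2) / (2 * R * d))
      - (1 / 2) * Real.sqrt ((r + R - d) * (r + R + d) * (d + r - R) * (d - r + R)) := by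

  have hd0 : 0 < d := lt_of_le_of_lt (abs_nonneg _) h₁
  have hzne : z₂ - z₁ ≠ 0 := by
    intro h
    rw [sub_eq_zero] at h
    rw [h, dist_self] at hd
    linarith
  set c : ℂ := (d : ℂ) / (z₂ - z₁) with hc
  have hnorm : ‖c‖ = 1 := by
    rw [hc, norm_div, Complex.norm_real, Real.norm_eq_abs, abs_of_pos hd0, ← dist_eq_norm,
      dist_comm, hd, div_self hd0.ne']
  have habs : ‖c‖ = 1 := by exact hnorm
  set a : Circle := ⟨c, by rw [Submonoid.unitSphere, Submonoid.mem_mk]; exact mem_sphere_zero_iff_norm.mpr hnorm⟩ with hadef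
  set f : ℂ → ℂ := fun z => c * z + -(c * z₁) with hf
  have hmp : MeasurePreserving f volume volume := by
    have h1 : MeasurePreserving (⇑(rotation a)) volume volume :=
      (rotation a).measurePreserving
    have h2 : ⇑(rotation a) = fun z : ℂ => c * z := by
      funext z; rw [rotation_apply]
    rw [h2] at h1
    have h3 := (measurePreserving_add_right (volume : Measure ℂ) (-(c * z₁))).comp h1
    exact h3
  have hcd : c * (z₂ - z₁) = (d : ℂ) := by rw [hc]; field_simp
  have hset : closedBall z₁ r ∩ closedBall z₂ R
      = f ⁻¹' (closedBall (0:ℂ) r ∩ closedBall (d:ℂ) R) := by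
    ext z
    simp only [Set.mem_inter_iff, mem_closedBall, Set.mem_preimage, hf]
    have e1 : dist (c * z + -(c * z₁)) (0:ℂ) = dist z z₁ := by
      rw [Complex.dist_eq, Complex.dist_eq, sub_zero,
        show c * z + -(c * z₁) = c * (z - z₁) by ring, norm_mul, habs, one_mul]
    have e2 : dist (c * z + -(c * z₁)) ((d:ℝ):ℂ) = dist z z₂ := by
      rw [Complex.dist_eq, Complex.dist_eq, ← hcd,
        show c * z + -(c * z₁) - c * (z₂ - z₁) = c * (z - z₂) by ring,
        norm_mul, habs, one_mul]
    rw [e1, e2]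
  rw [hset, hmp.measure_preimage
      ((measurableSet_closedBall.inter measurableSet_closedBall).nullMeasurableSet),
    lune_vol_eq_integral r R d hr hR,
    ENNReal.toReal_ofReal (integral_nonneg (fun x => by positivity)),
    lune_integral_eval r R d hr hR h₁ h₂]
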